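/- Let $d(a,b)$ denote the smallest constant such that $\int_a^b\big(\frac{1}{x}\int_a^x f(t)\,dt\big)^2 dx \le d(a,b)\int_a^b f^2(x)\,dx$ holds for every $f\in L^2[a,b]$. Then there exist absolute constants $c_1>0$ and $c_2>0$ such that for all $0<a<b$ with $\ln(b/a)\ge 1$, one has $4-\frac{c_1}{\ln^2(b/a)} \le d(a,b) \le 4-\frac{c_2}{\ln^2(b/a)}$. -/

import Mathlib

open Real MeasureTheory Set intervalIntegral

/-- derivative of `y ^ p * cos (μ log y + c)` -/
lemma hd_cos (μ c p : ℝ) {x : ℝ} (hx : 0 < x) :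
    HasDerivAt (fun y : ℝ => y ^ p * Real.cos (μ * Real.log y + c))
      (x ^ (p - 1) * (p * Real.cos (μ * Real.log x + c) - μ * Real.sin (μ * Real.log x + c))) x := by
  have h1 : HasDerivAt (fun y : ℝ => μ * Real.log y + c) (μ / x) x := by
    simpa [mul_comm, div_eq_mul_inv] using ((Real.hasDerivAt_log hx.ne').const_mul μ).add_const c
  have h2 := h1.cos
  have h3 : HasDerivAt (fun y : ℝ => y ^ p) (p * x ^ (p - 1)) x :=
    Real.hasDerivAt_rpow_const (Or.inl hx.ne')
  have h4 := h3.mul h2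
  refine h4.congr_deriv (Eq.symm ?_)
  have hxp : x ^ p = x ^ (p - 1) * x := by
    rw [← Real.rpow_add_one hx.ne']; ring_nf
  rw [hxp]; field_simp; ring

lemma hd_sin (μ c p : ℝ) {x : ℝ} (hx : 0 < x) :
    HasDerivAt (fun y : ℝ => y ^ p * Real.sin (μ * Real.log y + c))
      (x ^ (p - 1) * (p * Real.sin (μ * Real.log x + c) + μ * Real.cos (μ * Real.log x + c))) x := by
  have h1 : HasDerivAt (fun y : ℝ => μ * Real.log y + c) (μ / x) x := by
    simpa [mul_comm, div_eq_mul_inv] using ((Real.hasDerivAt_log hx.ne').const_mul μ).add_const c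
  have h2 := h1.sin
  have h3 : HasDerivAt (fun y : ℝ => y ^ p) (p * x ^ (p - 1)) x :=
    Real.hasDerivAt_rpow_const (Or.inl hx.ne')
  have h4 := h3.mul h2
  refine h4.congr_deriv (Eq.symm ?_)
  have hxp : x ^ p = x ^ (p - 1) * x := by
    rw [← Real.rpow_add_one hx.ne']; ring_nf
  rw [hxp]; field_simp

/-- Cauchy–Schwarz for integrals. -/
lemma cs_integral {μ : Measure ℝ} (φ ψ : ℝ → ℝ) (h1 : Integrable (fun t => φ t ^ 2) μ)
    (h2 : Integrable (fun t => ψ t ^ 2) μ) (hm1 : AEStronglyMeasurable φ μ)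
    (hm2 : AEStronglyMeasurable ψ μ) :
    (∫ t, φ t * ψ t ∂μ) ^ 2 ≤ (∫ t, φ t ^ 2 ∂μ) * (∫ t, ψ t ^ 2 ∂μ) := by
  have hint : Integrable (fun t => φ t * ψ t) μ := by
    refine Integrable.mono' ((h1.add h2).div_const 2) (hm1.mul hm2) ?_
    filter_upwards with t
    have h := sq_nonneg (|φ t| - |ψ t|)
    have : |φ t * ψ t| = |φ t| * |ψ t| := abs_mul _ _
    simp only [Real.norm_eq_abs, Pi.add_apply]
    rw [this]
    nlinarith [sq_abs (φ t), sq_abs (ψ t)]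
  set I := ∫ t, φ t * ψ t ∂μ with hI
  set A := ∫ t, φ t ^ 2 ∂μ with hA
  set B := ∫ t, ψ t ^ 2 ∂μ with hB
  have hBnn : 0 ≤ B := integral_nonneg fun t => sq_nonneg _
  rcases eq_or_lt_of_le hBnn with hB0 | hBpos
  · have hpsi0 : ∀ᵐ t ∂μ, ψ t ^ 2 = 0 := by
      have := (integral_eq_zero_iff_of_nonneg (fun t => sq_nonneg (ψ t)) h2).1 hB0.symm
      filter_upwards [this] with t ht using ht
    have hI0 : I = 0 := by
      rw [hI]
      refine integral_eq_zero_of_ae ?_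
      filter_upwards [hpsi0] with t ht
      have : ψ t = 0 := by nlinarith [sq_nonneg (ψ t)]
      simp [this]
    have hAnn : 0 ≤ A := integral_nonneg fun t => sq_nonneg _
    rw [hI0, ← hB0]
    simp
  · have key : 0 ≤ A - 2 * (I / B) * I + (I / B) ^ 2 * B := by
      have hexp : ∀ t, (φ t - (I / B) * ψ t) ^ 2
          = φ t ^ 2 - 2 * (I / B) * (φ t * ψ t) + (I / B) ^ 2 * ψ t ^ 2 := fun t => by ring
      have hInt2 : Integrable (fun t => φ t ^ 2 - 2 * (I / B) * (φ t * ψ t)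
          + (I / B) ^ 2 * ψ t ^ 2) μ :=
        (h1.sub (hint.const_mul _)).add (h2.const_mul _)
      have h0 : 0 ≤ ∫ t, (φ t - (I / B) * ψ t) ^ 2 ∂μ :=
        integral_nonneg fun t => sq_nonneg _
      calc (0 : ℝ) ≤ ∫ t, (φ t - (I / B) * ψ t) ^ 2 ∂μ := h0
        _ = ∫ t, (φ t ^ 2 - 2 * (I / B) * (φ t * ψ t) + (I / B) ^ 2 * ψ t ^ 2) ∂μ := by
            simp_rw [hexp]
        _ = A - 2 * (I / B) * I + (I / B) ^ 2 * B := by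
            have e1 : Integrable (fun t => φ t ^ 2 - 2 * (I / B) * (φ t * ψ t)) μ := by
              have := hint.const_mul (2 * (I / B))
              exact h1.sub (by simpa [mul_assoc] using this)
            have e2 : Integrable (fun t => (I / B) ^ 2 * ψ t ^ 2) μ := h2.const_mul _
            rw [integral_add e1 e2]
            have e3 : Integrable (fun t => 2 * (I / B) * (φ t * ψ t)) μ := by
              simpa [mul_assoc] using hint.const_mul (2 * (I / B))
            rw [integral_sub h1 e3, MeasureTheory.integral_const_mul, MeasureTheory.integral_const_mul]
    have : I ^ 2 / B ≤ A := by
      have hB' : B ≠ 0 := hBpos.ne'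
      have : A - 2 * (I / B) * I + (I / B) ^ 2 * B = A - I ^ 2 / B := by field_simp; ring
      linarith [key, this ▸ key]
    calc I ^ 2 = I ^ 2 / B * B := by field_simp
      _ ≤ A * B := by
          exact mul_le_mul_of_nonneg_right this hBnn

section Lower
variable {a b : ℝ}

lemma hardy_lower (ha : 0 < a) (hab : a < b) (hL : 1 ≤ Real.log (b / a)) (d : ℝ)
    (hd : ∀ f : ℝ → ℝ, IntegrableOn (fun x => f x ^ 2) (Set.Icc a b) →
      ∫ x in a..b, ((1 / x) * ∫ t in a..x, f t) ^ 2 ≤ d * ∫ x in a..b, f x ^ 2) :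
    4 - 160 / (Real.log (b / a)) ^ 2 ≤ d := by
  set L := Real.log (b / a) with hLdef
  have hb : 0 < b := ha.trans hab
  have hLpos : 0 < L := lt_of_lt_of_le one_pos hL
  have hlogba : Real.log b - Real.log a = L := by
    rw [hLdef, Real.log_div hb.ne' ha.ne']
  set μ := Real.pi / L with hμ
  have hμpos : 0 < μ := div_pos Real.pi_pos hLpos
  set c := -(μ * Real.log a) with hc
  -- test function
  set f₀ : ℝ → ℝ := fun t =>
    t ^ (-(1/2) : ℝ) * (μ * Real.cos (μ * Real.log t + c) + (1/2) * Real.sin (μ * Real.log t + c))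
    with hf₀
  -- continuity on Icc a b
  have hpos : ∀ x ∈ Icc a b, (0:ℝ) < x := fun x hx => lt_of_lt_of_le ha hx.1
  have hcont : ContinuousOn f₀ (Icc a b) := by
    apply ContinuousOn.mul
    · exact fun x hx => (Real.continuousAt_rpow_const x _ (Or.inl (hpos x hx).ne')).continuousWithinAt
    · apply ContinuousOn.add
      · exact ContinuousOn.mul continuousOn_const (Real.continuous_cos.comp_continuousOn
          (((Real.continuousOn_log.mono (fun x hx => by
              simp [(hpos x hx).ne'])).const_smul μ).add continuousOn_const))
      · exact ContinuousOn.mul continuousOn_const (Real.continuous_sin.comp_continuousOn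
          (((Real.continuousOn_log.mono (fun x hx => by
              simp [(hpos x hx).ne'])).const_smul μ).add continuousOn_const))
  have hf2int : IntegrableOn (fun x => f₀ x ^ 2) (Set.Icc a b) :=
    (hcont.pow 2).integrableOn_Icc
  -- primitive of f₀
  have hF : ∀ x ∈ Icc a b, (∫ t in a..x, f₀ t) = x ^ ((1:ℝ)/2) * Real.sin (μ * Real.log x + c) := by
    intro x hx
    have hsub : uIcc a x ⊆ Icc a b := by
      rw [uIcc_of_le hx.1]; exact Icc_subset_Icc le_rfl hx.2
    have hder : ∀ y ∈ uIcc a x, HasDerivAt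
        (fun y : ℝ => y ^ ((1:ℝ)/2) * Real.sin (μ * Real.log y + c)) (f₀ y) y := by
      intro y hy
      have hy' : y ∈ Icc a b := hsub hy
      have h0 : 0 < y := hpos y hy'
      have := hd_sin μ c (1/2) h0
      have he : (1/2 - 1 : ℝ) = -(1/2) := by norm_num
      rw [he] at this
      convert this using 1
      simp only [hf₀]
      ring
    have hii : IntervalIntegrable f₀ volume a x :=
      (hcont.mono hsub).intervalIntegrable
    rw [integral_eq_sub_of_hasDerivAt hder hii]
    have : μ * Real.log a + c = 0 := by rw [hc]; ring
    rw [this, Real.sin_zero, mul_zero, sub_zero]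
  have hμL : μ * L = Real.pi := by rw [hμ]; field_simp
  have hAa : μ * Real.log a + c = 0 := by rw [hc]; ring
  have hAb : μ * Real.log b + c = Real.pi := by
    rw [hc, ← hμL]
    have : μ * Real.log b - μ * Real.log a = μ * L := by rw [← mul_sub, hlogba]
    linarith [this]
  -- continuity of argument map on positives
  have hcontA : ContinuousOn (fun x : ℝ => μ * Real.log x + c) (Icc a b) :=
    ((Real.continuousOn_log.mono (fun x hx => by
      simp [(hpos x hx).ne'])).const_smul μ).add continuousOn_const
  -- LHS evaluation
  have hLHS : (∫ x in a..b, ((1 / x) * ∫ t in a..x, f₀ t) ^ 2) = L / 2 := by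
    have h1 : EqOn (fun x => ((1 / x) * ∫ t in a..x, f₀ t) ^ 2)
        (fun x => Real.sin (μ * Real.log x + c) ^ 2 * x⁻¹) (uIcc a b) := by
      intro x hx
      have hx' : x ∈ Icc a b := by rwa [uIcc_of_le hab.le] at hx
      have h0 : 0 < x := hpos x hx'
      simp only
      rw [hF x hx']
      have hsq : (x ^ ((1:ℝ)/2)) ^ 2 = x := by
        rw [← Real.rpow_natCast (x ^ ((1:ℝ)/2)) 2, ← Real.rpow_mul h0.le]; norm_num
      have : ((1 / x) * (x ^ ((1:ℝ)/2) * Real.sin (μ * Real.log x + c))) ^ 2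
          = (x ^ ((1:ℝ)/2)) ^ 2 * Real.sin (μ * Real.log x + c) ^ 2 * (1/x)^2 := by ring
      rw [this, hsq]
      field_simp
    rw [intervalIntegral.integral_congr h1]
    have hder : ∀ x ∈ uIcc a b, HasDerivAt
        (fun y => (1/2:ℝ) * Real.log y - L/(4*Real.pi) * Real.sin (2*(μ * Real.log y + c)))
        (Real.sin (μ * Real.log x + c) ^ 2 * x⁻¹) x := by
      intro x hx
      have hx' : x ∈ Icc a b := by rwa [uIcc_of_le hab.le] at hx
      have h0 : 0 < x := hpos x hx'
      have hlog := Real.hasDerivAt_log h0.ne'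
      have d1 : HasDerivAt (fun y : ℝ => (1/2:ℝ) * Real.log y) ((1/2) * x⁻¹) x := hlog.const_mul _
      have d2 : HasDerivAt (fun y : ℝ => 2*(μ * Real.log y + c)) (2*(μ * x⁻¹)) x := by
        exact (((hlog.const_mul μ)).add_const c).const_mul 2
      have d3 := d2.sin
      have d4 := d3.const_mul (L/(4*Real.pi))
      have d5 := d1.sub d4
      refine d5.congr_deriv (Eq.symm ?_)
      rw [Real.sin_sq_eq_half_sub]
      have hπ : Real.pi ≠ 0 := Real.pi_ne_zero
      have hL0 : L ≠ 0 := hLpos.ne'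
      have hμsub : μ = Real.pi / L := hμ
      rw [hμsub]
      field_simp
      ring
    have hii2 : IntervalIntegrable (fun x => Real.sin (μ * Real.log x + c) ^ 2 * x⁻¹) volume a b := by
      apply ContinuousOn.intervalIntegrable
      rw [uIcc_of_le hab.le]
      exact ((Real.continuous_sin.comp_continuousOn hcontA).pow 2).mul
        (continuousOn_inv₀.mono (fun x hx => by simp [(hpos x hx).ne']))
    rw [intervalIntegral.integral_eq_sub_of_hasDerivAt hder hii2]
    rw [hAa, hAb]
    norm_num [Real.sin_two_pi]
    linarith [hlogba]
  -- RHS evaluation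
  have hRHS : (∫ x in a..b, f₀ x ^ 2) = Real.pi^2/(2*L) + L/8 := by
    have h1 : EqOn (fun x => f₀ x ^ 2)
        (fun x => (μ^2 * Real.cos (μ * Real.log x + c) ^ 2
          + μ * (Real.sin (μ * Real.log x + c) * Real.cos (μ * Real.log x + c))
          + (1/4) * Real.sin (μ * Real.log x + c) ^ 2) * x⁻¹) (uIcc a b) := by
      intro x hx
      have hx' : x ∈ Icc a b := by rwa [uIcc_of_le hab.le] at hx
      have h0 : 0 < x := hpos x hx'
      simp only [hf₀]
      have hsq : (x ^ (-(1/2):ℝ)) ^ 2 = x⁻¹ := by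
        rw [← Real.rpow_natCast (x ^ (-(1/2):ℝ)) 2, ← Real.rpow_mul h0.le]
        norm_num
        rw [Real.rpow_neg_one]
      have : (x ^ (-(1/2):ℝ) * (μ * Real.cos (μ * Real.log x + c) + 1 / 2 * Real.sin (μ * Real.log x + c))) ^ 2
          = (x ^ (-(1/2):ℝ))^2 * (μ * Real.cos (μ * Real.log x + c) + 1 / 2 * Real.sin (μ * Real.log x + c))^2 := by
        ring
      rw [this, hsq]
      ring
    rw [intervalIntegral.integral_congr h1]
    have hder : ∀ x ∈ uIcc a b, HasDerivAt
        (fun y => (μ^2/2 + 1/8) * Real.log y + ((μ^2/2 - 1/8)/(2*μ)) * Real.sin (2*(μ * Real.log y + c))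
          - (1/4) * Real.cos (2*(μ * Real.log y + c)))
        ((μ^2 * Real.cos (μ * Real.log x + c) ^ 2
          + μ * (Real.sin (μ * Real.log x + c) * Real.cos (μ * Real.log x + c))
          + (1/4) * Real.sin (μ * Real.log x + c) ^ 2) * x⁻¹) x := by
      intro x hx
      have hx' : x ∈ Icc a b := by rwa [uIcc_of_le hab.le] at hx
      have h0 : 0 < x := hpos x hx'
      have hlog := Real.hasDerivAt_log h0.ne'
      have d1 : HasDerivAt (fun y : ℝ => (μ^2/2 + 1/8) * Real.log y) ((μ^2/2 + 1/8) * x⁻¹) x :=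
        hlog.const_mul _
      have d2 : HasDerivAt (fun y : ℝ => 2*(μ * Real.log y + c)) (2*(μ * x⁻¹)) x :=
        (((hlog.const_mul μ)).add_const c).const_mul 2
      have d3 := (d2.sin).const_mul ((μ^2/2 - 1/8)/(2*μ))
      have d4 := (d2.cos).const_mul (1/4:ℝ)
      have d5 := (d1.add d3).sub d4
      refine d5.congr_deriv (Eq.symm ?_)
      have hμ0 : μ ≠ 0 := hμpos.ne'
      rw [Real.cos_sq, Real.sin_sq_eq_half_sub, Real.sin_two_mul]
      field_simp
      ring
    have hii2 : IntervalIntegrable (fun x => (μ^2 * Real.cos (μ * Real.log x + c) ^ 2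
          + μ * (Real.sin (μ * Real.log x + c) * Real.cos (μ * Real.log x + c))
          + (1/4) * Real.sin (μ * Real.log x + c) ^ 2) * x⁻¹) volume a b := by
      apply ContinuousOn.intervalIntegrable
      rw [uIcc_of_le hab.le]
      have hc1 := Real.continuous_cos.comp_continuousOn hcontA
      have hs1 := Real.continuous_sin.comp_continuousOn hcontA
      exact ((((hc1.pow 2).const_smul (μ^2)).add ((hs1.mul hc1).const_smul μ)).add
        ((hs1.pow 2).const_smul (1/4:ℝ))).mul
        (continuousOn_inv₀.mono (fun x hx => by simp [(hpos x hx).ne']))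
    rw [intervalIntegral.integral_eq_sub_of_hasDerivAt hder hii2]
    rw [hAa, hAb]
    simp only [mul_zero, Real.sin_zero, Real.cos_zero, Real.sin_two_pi, Real.cos_two_pi]
    have hL0 : L ≠ 0 := hLpos.ne'
    have h8 : (μ^2/2 + 1/8) * L = Real.pi^2/(2*L) + L/8 := by
      rw [hμ]
      field_simp
    rw [← h8, ← hlogba]
    ring
  -- conclusion
  have hkey := hd f₀ hf2int
  rw [hLHS, hRHS] at hkey
  have hPpos : 0 < Real.pi^2/(2*L) + L/8 := by positivity
  have hπlt : Real.pi < 3.15 := Real.pi_lt_d2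
  have hπgt : 0 < Real.pi := Real.pi_pos
  have hstep : (4 - 160 / L^2) * (Real.pi^2/(2*L) + L/8) ≤ L / 2 := by
    have e : (4 - 160 / L ^ 2) * (Real.pi ^ 2 / (2 * L) + L / 8)
        = L/2 + (2*Real.pi^2/L - 20/L) - (80*Real.pi^2/L^3) := by
      field_simp
      ring
    rw [e]
    have h1 : 2*Real.pi^2/L - 20/L ≤ 0 := by
      apply sub_nonpos.2
      gcongr
      nlinarith
    have h2 : 0 ≤ 80*Real.pi^2/L^3 := by positivity
    linarith
  calc 4 - 160 / L^2 = ((4 - 160 / L^2) * (Real.pi^2/(2*L) + L/8)) / (Real.pi^2/(2*L) + L/8) := by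
        field_simp
    _ ≤ (L/2) / (Real.pi^2/(2*L) + L/8) := by
        gcongr
    _ ≤ d := by
        rw [div_le_iff₀ hPpos]; linarith [hkey]

end Lower
section Upper
variable {a b : ℝ}

set_option maxHeartbeats 2000000 in
lemma hardy_upper (ha : 0 < a) (hab : a < b) (hL : 1 ≤ Real.log (b / a)) :
    ∀ f : ℝ → ℝ, IntegrableOn (fun x => f x ^ 2) (Set.Icc a b) →
      ∫ x in a..b, ((1 / x) * ∫ t in a..x, f t) ^ 2
        ≤ (4 - 2 / (Real.log (b / a)) ^ 2) * ∫ x in a..b, f x ^ 2 := by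
  set L := Real.log (b / a) with hLdef
  have hb : 0 < b := ha.trans hab
  have hLpos : 0 < L := lt_of_lt_of_le one_pos hL
  have hlogba : Real.log b - Real.log a = L := by
    rw [hLdef, Real.log_div hb.ne' ha.ne']
  set μ : ℝ := 1 / (2 * L) with hμdef
  have hμpos : 0 < μ := by positivity
  have hμle : μ ≤ 1 / 2 := by
    rw [hμdef]; rw [div_le_div_iff₀ (by positivity) (by norm_num)]; linarith
  set C : ℝ := 4 * L ^ 2 / (L ^ 2 + 1) with hCdef
  have hCpos : 0 < C := by positivity
  have hCmu : C * (1 / 4 + μ ^ 2) = 1 := by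
    rw [hCdef, hμdef]; field_simp; ring
  set A : ℝ := C / 2 with hAdef
  set B : ℝ := C * μ with hBdef
  set κ : ℝ := -(μ * Real.log a) - 1 / 2 with hκdef
  clear_value L μ C A B κ
  -- the phase
  have hωa : μ * Real.log a + κ = -(1 / 2) := by rw [hκdef]; ring
  have hωb : μ * Real.log b + κ = 0 := by
    rw [hκdef, hμdef]
    have : Real.log b = L + Real.log a := by linarith [hlogba]
    rw [this]; field_simp; ring
  have hωmem : ∀ x ∈ Icc a b, -(1/2) ≤ μ * Real.log x + κ ∧ μ * Real.log x + κ ≤ 0 := by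
    intro x hx
    have h1 : Real.log a ≤ Real.log x := Real.log_le_log ha hx.1
    have h2 : Real.log x ≤ Real.log b := Real.log_le_log (lt_of_lt_of_le ha hx.1) hx.2
    constructor
    · nlinarith [hωa]
    · nlinarith [hωb]
  have hpos : ∀ x ∈ Icc a b, (0:ℝ) < x := fun x hx => lt_of_lt_of_le ha hx.1
  -- the weight functions
  set g₀ : ℝ → ℝ := fun x => Real.cos (μ * Real.log x + κ) with hg₀def
  have hcoshalf : (1:ℝ)/2 ≤ Real.cos (1/2) := by
    have h3 : Real.cos (Real.pi/3) ≤ Real.cos (1/2) := by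
      apply Real.cos_le_cos_of_nonneg_of_le_pi (by norm_num)
      · linarith [Real.pi_pos]
      · linarith [Real.pi_gt_three]
    rwa [Real.cos_pi_div_three] at h3
  have hg₀ : ∀ x ∈ Icc a b, 1/2 ≤ g₀ x := by
    intro x hx
    obtain ⟨h1, h2⟩ := hωmem x hx
    have habs : |μ * Real.log x + κ| ≤ 1/2 := abs_le.2 ⟨h1, h2.trans (by norm_num)⟩
    have : Real.cos (1/2) ≤ Real.cos |μ * Real.log x + κ| := by
      apply Real.cos_le_cos_of_nonneg_of_le_pi (abs_nonneg _)
      · linarith [Real.pi_gt_three]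
      · exact habs
    rw [Real.cos_abs] at this
    exact le_trans hcoshalf this
  have hg₀pos : ∀ x ∈ Icc a b, (0:ℝ) < g₀ x := fun x hx => lt_of_lt_of_le (by norm_num) (hg₀ x hx)
  set Θ : ℝ → ℝ := fun x => A * (x ^ ((1:ℝ)/2) * Real.cos (μ * Real.log x + κ))
      + B * (x ^ ((1:ℝ)/2) * Real.sin (μ * Real.log x + κ)) with hΘdef
  set Ta : ℝ := Θ a with hTadef
  set Ψ : ℝ → ℝ := fun x => -C * (x ^ ((-(1/2) : ℝ)) * Real.cos (μ * Real.log x + κ)) + Ta * x⁻¹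
      with hΨdef
  set h₁ : ℝ → ℝ := fun t => t ^ ((1:ℝ)/2) / g₀ t with hh₁def
  set φ₁ : ℝ → ℝ := fun x => (x ^ 2)⁻¹ * (Θ x - Ta) with hφ₁def
  -- derivatives
  have dΘ : ∀ x : ℝ, 0 < x → HasDerivAt Θ (g₀ x * x ^ ((-(1/2) : ℝ))) x := by
    intro x hx
    have h1 := (hd_cos μ κ (1/2) hx).const_mul A
    have h2 := (hd_sin μ κ (1/2) hx).const_mul B
    have h3 := h1.add h2
    have he : (1/2 - 1 : ℝ) = -(1/2) := by norm_num
    rw [he] at h3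
    refine h3.congr_deriv (Eq.symm ?_)
    have e1 : A / 2 + B * μ = 1 := by rw [hAdef, hBdef]; linear_combination hCmu
    have e2 : B / 2 - A * μ = 0 := by rw [hAdef, hBdef]; ring
    simp only [hg₀def]
    linear_combination (-(x ^ ((-(1/2) : ℝ)) * Real.cos (μ * Real.log x + κ))) * e1
      - (x ^ ((-(1/2) : ℝ)) * Real.sin (μ * Real.log x + κ)) * e2
  have dΨ : ∀ x : ℝ, 0 < x → HasDerivAt Ψ (φ₁ x) x := by
    intro x hx
    have h1 := (hd_cos μ κ ((-(1/2) : ℝ)) hx).const_mul (-C)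
    have h2 := (hasDerivAt_inv hx.ne').const_mul Ta
    have h3 := h1.add h2
    refine h3.congr_deriv (Eq.symm ?_)
    have hx2 : (x ^ 2)⁻¹ = x ^ (-(2:ℝ)) := by
      rw [← Real.rpow_natCast x 2, ← Real.rpow_neg hx.le]; norm_num
    have hxa : x ^ ((-(1/2) : ℝ) - 1) = x ^ (-(2:ℝ)) * x ^ ((1:ℝ)/2) := by
      rw [← Real.rpow_add hx]; norm_num
    simp only [hφ₁def, hΘdef, hxa, hx2]
    have e1 : A = C / 2 := hAdef
    have e2 : B = C * μ := hBdef
    linear_combination (x ^ (-(2:ℝ)) * x ^ ((1:ℝ)/2) * Real.cos (μ * Real.log x + κ)) * e1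
      + (x ^ (-(2:ℝ)) * x ^ ((1:ℝ)/2) * Real.sin (μ * Real.log x + κ)) * e2
  -- continuity helpers
  have hcontω : ContinuousOn (fun x : ℝ => μ * Real.log x + κ) (Icc a b) :=
    ((Real.continuousOn_log.mono (fun x hx => by
        simp [(hpos x hx).ne'])).const_smul μ).add continuousOn_const
  have hcontg₀ : ContinuousOn g₀ (Icc a b) := Real.continuous_cos.comp_continuousOn hcontω
  have hcontsin : ContinuousOn (fun x : ℝ => Real.sin (μ * Real.log x + κ)) (Icc a b) :=
    Real.continuous_sin.comp_continuousOn hcontω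
  have hcontrpow : ∀ p : ℝ, ContinuousOn (fun x : ℝ => x ^ (p : ℝ)) (Icc a b) := fun p x hx =>
    (Real.continuousAt_rpow_const x p (Or.inl (hpos x hx).ne')).continuousWithinAt
  have hcontΘ : ContinuousOn Θ (Icc a b) :=
    (continuousOn_const.mul ((hcontrpow (1/2)).mul hcontg₀)).add
      (continuousOn_const.mul ((hcontrpow (1/2)).mul hcontsin))
  have hcontφ₁ : ContinuousOn φ₁ (Icc a b) := by
    apply ContinuousOn.mul
    · exact ContinuousOn.inv₀ ((continuous_pow 2).continuousOn)
        (fun x hx => pow_ne_zero 2 (hpos x hx).ne')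
    · exact hcontΘ.sub continuousOn_const
  have hcontg : ContinuousOn (fun t : ℝ => g₀ t * t ^ ((-(1/2)) : ℝ)) (Icc a b) :=
    hcontg₀.mul (hcontrpow _)
  have hconth₁ : ContinuousOn h₁ (Icc a b) :=
    (hcontrpow _).div hcontg₀ (fun x hx => (hg₀pos x hx).ne')
  -- FTC: the closed form of H
  have hHc : ∀ x ∈ Icc a b, (∫ t in a..x, g₀ t * t ^ ((-(1/2)) : ℝ)) = Θ x - Ta := by
    intro x hx
    have hsub : uIcc a x ⊆ Icc a b := by
      rw [uIcc_of_le hx.1]; exact Icc_subset_Icc le_rfl hx.2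
    rw [integral_eq_sub_of_hasDerivAt (fun y hy => dΘ y (hpos y (hsub hy)))
      ((hcontg.mono hsub).intervalIntegrable), hTadef]
  have hHcnn : ∀ x ∈ Icc a b, 0 ≤ Θ x - Ta := by
    intro x hx
    rw [← hHc x hx]
    apply intervalIntegral.integral_nonneg hx.1
    intro t ht
    have ht' : t ∈ Icc a b := ⟨ht.1, le_trans ht.2 hx.2⟩
    exact mul_nonneg (by linarith [hg₀ t ht']) (Real.rpow_nonneg (hpos t ht').le _)
  have hφ₁nn : ∀ x ∈ Icc a b, 0 ≤ φ₁ x := by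
    intro x hx
    exact mul_nonneg (inv_nonneg.2 (sq_nonneg x)) (hHcnn x hx)
  -- FTC for Ψ
  have hRint : ∀ t ∈ Icc a b, (∫ x in t..b, φ₁ x) = Ψ b - Ψ t := by
    intro t ht
    have hsub : uIcc t b ⊆ Icc a b := by
      rw [uIcc_of_le ht.2]; exact Icc_subset_Icc ht.1 le_rfl
    exact integral_eq_sub_of_hasDerivAt (fun y hy => dΨ y (hpos y (hsub hy)))
      ((hcontφ₁.mono hsub).intervalIntegrable)
  -- Ta is nonnegative
  have hTann : 0 ≤ Ta := by
    rw [hTadef, hΘdef]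
    simp only
    rw [hωa, Real.cos_neg, Real.sin_neg]
    have hsin : Real.sin (1/2) < 1/2 := Real.sin_lt (by norm_num)
    have hsinnn : 0 ≤ Real.sin (1/2) :=
      Real.sin_nonneg_of_nonneg_of_le_pi (by norm_num) (by linarith [Real.pi_gt_three])
    have hApos : 0 < A := by rw [hAdef]; positivity
    have hBnn : 0 ≤ B := by rw [hBdef]; positivity
    have hBA : B ≤ A := by
      rw [hAdef, hBdef]
      have := mul_le_mul_of_nonneg_left hμle hCpos.le
      linarith
    have hra : 0 ≤ a ^ ((1:ℝ)/2) := Real.rpow_nonneg ha.le _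
    have h5 : 0 ≤ A * Real.cos (1/2) - B * Real.sin (1/2) := by
      have k1 : B * Real.sin (1/2) ≤ B * (1/2) := mul_le_mul_of_nonneg_left hsin.le hBnn
      have k2 : A * (1/2) ≤ A * Real.cos (1/2) := mul_le_mul_of_nonneg_left hcoshalf hApos.le
      linarith
    have h6 := mul_nonneg hra h5
    linarith [h6]
  -- the kernel bound
  have hK : ∀ t ∈ Icc a b, h₁ t * (Ψ b - Ψ t) ≤ C := by
    intro t ht
    have htpos := hpos t ht
    have hgpos := hg₀pos t ht
    simp only [hh₁def]
    rw [div_mul_eq_mul_div, div_le_iff₀ hgpos]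
    simp only [hΨdef, hg₀def]
    rw [hωb, Real.cos_zero]
    have f1 : t ^ ((1:ℝ)/2) * t ^ ((-(1/2)) : ℝ) = 1 := by
      rw [← Real.rpow_add htpos]; norm_num
    have f2 : t ^ ((1:ℝ)/2) * t⁻¹ = t ^ ((-(1/2)) : ℝ) := by
      rw [← Real.rpow_neg_one t, ← Real.rpow_add htpos]; norm_num
    have f3 : t ^ ((1:ℝ)/2) * b⁻¹ ≤ t ^ ((-(1/2)) : ℝ) := by
      have hinv : b⁻¹ ≤ t⁻¹ := by
        apply inv_anti₀ htpos ht.2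
      calc t ^ ((1:ℝ)/2) * b⁻¹ ≤ t ^ ((1:ℝ)/2) * t⁻¹ :=
            mul_le_mul_of_nonneg_left hinv (Real.rpow_nonneg htpos.le _)
        _ = t ^ ((-(1/2)) : ℝ) := f2
    have e : t ^ ((1:ℝ)/2) * (-C * (b ^ ((-(1/2)) : ℝ) * 1) + Ta * b⁻¹
          - (-C * (t ^ ((-(1/2)) : ℝ) * Real.cos (μ * Real.log t + κ)) + Ta * t⁻¹))
        = -(C * (t ^ ((1:ℝ)/2) * b ^ ((-(1/2)) : ℝ)))
          + Ta * (t ^ ((1:ℝ)/2) * b⁻¹)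
          + (C * Real.cos (μ * Real.log t + κ)) * (t ^ ((1:ℝ)/2) * t ^ ((-(1/2)) : ℝ))
          - Ta * (t ^ ((1:ℝ)/2) * t⁻¹) := by ring
    rw [e, f1, f2, mul_one]
    have h6 : Ta * (t ^ ((1:ℝ)/2) * b⁻¹) ≤ Ta * t ^ ((-(1/2)) : ℝ) :=
      mul_le_mul_of_nonneg_left f3 hTann
    have h7 : 0 ≤ C * (t ^ ((1:ℝ)/2) * b ^ ((-(1/2)) : ℝ)) := by
      apply mul_nonneg hCpos.le
      exact mul_nonneg (Real.rpow_nonneg htpos.le _) (Real.rpow_nonneg hb.le _)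
    linarith
  have hC2 : C ≤ 4 - 2 / L ^ 2 := by
    have e : (4 - 2 / L ^ 2) - C = (2 * L ^ 2 - 2) / (L ^ 2 * (L ^ 2 + 1)) := by
      rw [hCdef]; field_simp; ring
    have h8 : 0 ≤ (2 * L ^ 2 - 2) / (L ^ 2 * (L ^ 2 + 1)) := by
      apply div_nonneg (by nlinarith) (by positivity)
    linarith
  -- main part
  intro f hf2
  have hf2Ioc : IntegrableOn (fun x => f x ^ 2) (Ioc a b) := hf2.mono_set Ioc_subset_Icc_self
  have hfabs : IntegrableOn (fun t => |f t|) (Icc a b) := by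
    have hm : AEStronglyMeasurable (fun t => |f t|) (volume.restrict (Icc a b)) := by
      have he : (fun t => |f t|) = fun t => Real.sqrt (f t ^ 2) := by
        funext t; rw [Real.sqrt_sq_eq_abs]
      rw [he]
      exact Real.continuous_sqrt.comp_aestronglyMeasurable hf2.aestronglyMeasurable
    apply Integrable.mono' (g := fun t => 1 + f t ^ 2)
      ((integrableOn_const (C := (1:ℝ)) measure_Icc_lt_top.ne ENNReal.coe_ne_top).add hf2).integrable hm
    filter_upwards with t
    rw [Real.norm_eq_abs, abs_abs]
    nlinarith [sq_abs (f t), sq_nonneg (|f t| - 1)]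
  set Sset : Set ℝ := {x | x ∈ Icc a b ∧ IntegrableOn f (Ioc a x)} with hSdef
  have hSne : a ∈ Sset := ⟨left_mem_Icc.2 hab.le, by simp [Set.Ioc_self]⟩
  have hSbdd : BddAbove Sset := ⟨b, fun x hx => hx.1.2⟩
  set c₀ : ℝ := sSup Sset with hc₀def
  have hc₀a : a ≤ c₀ := le_csSup hSbdd hSne
  have hc₀b : c₀ ≤ b := csSup_le ⟨a, hSne⟩ (fun x hx => hx.1.2)
  have hfc₀ : IntegrableOn f (Ioc a c₀) := by
    rcases eq_or_lt_of_le hc₀a with heq | hlt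
    · rw [← heq]; simp [Set.Ioc_self]
    · have hmeas : AEStronglyMeasurable f (volume.restrict (Ioo a c₀)) := by
        rw [aestronglyMeasurable_iff_aemeasurable]
        set u : ℕ → ℝ := fun n => c₀ - (c₀ - a) / (n + 1) with hudef
        have hcover : Ioo a c₀ ⊆ ⋃ n : ℕ, Ioc a (u n) := by
          intro y hy
          obtain ⟨n, hn⟩ := exists_nat_gt ((c₀ - a) / (c₀ - y))
          simp only [Set.mem_iUnion]
          refine ⟨n, hy.1, ?_⟩
          rw [hudef]
          simp only
          have hy2 : 0 < c₀ - y := by linarith [hy.2]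
          have h1 : c₀ - a < n * (c₀ - y) := by
            rw [div_lt_iff₀ hy2] at hn; linarith
          have h2 : (c₀ - a)/((n:ℝ)+1) ≤ c₀ - y := by
            rw [div_le_iff₀ (by positivity : (0:ℝ) < (n:ℝ)+1)]
            nlinarith [hy2]
          linarith
        have hun : ∀ n : ℕ, AEMeasurable f (volume.restrict (Ioc a (u n))) := by
          intro n
          have hunlt : u n < c₀ := by
            rw [hudef]
            simp only
            have : 0 < (c₀ - a)/((n:ℝ)+1) := by
              apply div_pos (by linarith) (by positivity)
            linarith
          obtain ⟨z, hz, hz2⟩ := exists_lt_of_lt_csSup ⟨a, hSne⟩ hunlt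
          exact ((hz.2.mono_set (Set.Ioc_subset_Ioc le_rfl hz2.le)).aestronglyMeasurable).aemeasurable
        exact (aemeasurable_iUnion_iff.2 hun).mono_measure
          (Measure.restrict_mono hcover le_rfl)
      have hint : IntegrableOn f (Ioo a c₀) := by
        apply Integrable.mono' (hfabs.mono_set (fun y hy => ⟨hy.1.le, hy.2.le.trans hc₀b⟩)) hmeas
        filter_upwards with t
        rw [Real.norm_eq_abs]
      rw [integrableOn_Ioc_iff_integrableOn_Ioo]
      exact hint
  have hF0 : ∀ x, c₀ < x → x ≤ b → (∫ t in a..x, f t) = 0 := by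
    intro x hcx hxb
    apply intervalIntegral.integral_undef
    rw [intervalIntegrable_iff_integrableOn_Ioc_of_le (le_trans hc₀a hcx.le)]
    intro hcontra
    have hxS : x ∈ Sset := ⟨⟨le_trans hc₀a hcx.le, hxb⟩, hcontra⟩
    have : x ≤ c₀ := le_csSup hSbdd hxS
    linarith
  set F : ℝ → ℝ := fun x => ∫ t in a..x, f t with hFdef
  have hfIcc : IntegrableOn f (Icc a c₀) := by
    rw [integrableOn_Icc_iff_integrableOn_Ioc]; exact hfc₀
  have hFcont : ContinuousOn F (Icc a c₀) := by
    apply (intervalIntegral.continuousOn_primitive hfIcc).congr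
    intro x hx
    rw [hFdef]
    simp only
    rw [intervalIntegral.integral_of_le hx.1]
  have hIccsub : Icc a c₀ ⊆ Icc a b := Icc_subset_Icc le_rfl hc₀b
  have hIocsub : Ioc a c₀ ⊆ Ioc a b := Ioc_subset_Ioc le_rfl hc₀b
  have hintgrand1 : IntervalIntegrable (fun x => ((1/x) * F x)^2) volume a c₀ := by
    apply ContinuousOn.intervalIntegrable
    rw [uIcc_of_le hc₀a]
    apply ContinuousOn.pow
    exact (continuousOn_const.div continuousOn_id
      (fun x hx => (hpos x (hIccsub hx)).ne')).mul hFcont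
  have hzero2 : EqOn (fun x => ((1/x) * F x)^2) 0 (Ioc c₀ b) := by
    intro x hx
    simp only [hFdef]
    rw [hF0 x hx.1 hx.2]
    simp
  have hintgrand2 : IntervalIntegrable (fun x => ((1/x) * F x)^2) volume c₀ b := by
    rw [intervalIntegrable_iff_integrableOn_Ioc_of_le hc₀b]
    exact (integrableOn_congr_fun hzero2 measurableSet_Ioc).2 (integrableOn_zero)
  have hE1 : (∫ x in a..b, ((1/x) * F x)^2) = ∫ x in Ioc a c₀, ((1/x) * F x)^2 := by
    rw [← intervalIntegral.integral_add_adjacent_intervals hintgrand1 hintgrand2]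
    have h2 : (∫ x in c₀..b, ((1/x) * F x)^2) = 0 := by
      rw [intervalIntegral.integral_of_le hc₀b, setIntegral_congr_fun measurableSet_Ioc hzero2]
      simp
    rw [h2, add_zero, intervalIntegral.integral_of_le hc₀a]
  -- the weighted square integrand
  set ψ₁ : ℝ → ℝ := fun t => f t ^ 2 * h₁ t with hψ₁def
  have hh₁nn : ∀ t ∈ Icc a b, 0 ≤ h₁ t := fun t ht =>
    div_nonneg (Real.rpow_nonneg (hpos t ht).le _) (hg₀pos t ht).le
  have hh₁bd : ∀ t ∈ Icc a b, h₁ t ≤ 2 * b ^ ((1:ℝ)/2) := by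
    intro t ht
    simp only [hh₁def]
    rw [div_le_iff₀ (hg₀pos t ht)]
    have h1 : t ^ ((1:ℝ)/2) ≤ b ^ ((1:ℝ)/2) :=
      Real.rpow_le_rpow (hpos t ht).le ht.2 (by norm_num)
    have h2 := mul_le_mul_of_nonneg_left (hg₀ t ht)
      (by positivity : (0:ℝ) ≤ 2 * b ^ ((1:ℝ)/2))
    linarith
  have hψ₁int : IntegrableOn ψ₁ (Icc a b) := by
    apply Integrable.mono' (hf2.mul_const (2 * b ^ ((1:ℝ)/2)))
      (hf2.aestronglyMeasurable.mul (hconth₁.aestronglyMeasurable measurableSet_Icc))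
    rw [ae_restrict_iff' measurableSet_Icc]
    filter_upwards with t ht
    have hnn : (0:ℝ) ≤ f t ^ 2 * h₁ t := mul_nonneg (sq_nonneg _) (hh₁nn t ht)
    show ‖f t ^ 2 * h₁ t‖ ≤ f t ^ 2 * (2 * b ^ ((1:ℝ)/2))
    rw [Real.norm_eq_abs, abs_of_nonneg hnn]
    exact mul_le_mul_of_nonneg_left (hh₁bd t ht) (sq_nonneg _)
  set Φ : ℝ → ℝ := fun x => ∫ t in Ioc a x, ψ₁ t with hΦdef
  have hΦcont : ContinuousOn Φ (Icc a c₀) :=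
    intervalIntegral.continuousOn_primitive (hψ₁int.mono_set hIccsub)
  have hΦnn : ∀ x ∈ Icc a c₀, 0 ≤ Φ x := by
    intro x hx
    apply setIntegral_nonneg measurableSet_Ioc
    intro t ht
    exact mul_nonneg (sq_nonneg _) (hh₁nn t ⟨ht.1.le, ht.2.trans (hx.2.trans hc₀b)⟩)
  -- pointwise Cauchy-Schwarz
  have hCS : ∀ x ∈ Ioc a c₀, ((1/x) * F x)^2 ≤ φ₁ x * Φ x := by
    intro x hx
    have hxb : x ∈ Icc a b := ⟨hx.1.le, hx.2.trans hc₀b⟩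
    have hx0 : 0 < x := hpos x hxb
    have hsubx : Ioc a x ⊆ Icc a b := fun y hy => ⟨hy.1.le, hy.2.trans hxb.2⟩
    have hfx : IntegrableOn f (Ioc a x) := hfc₀.mono_set (Ioc_subset_Ioc le_rfl hx.2)
    have hFx : F x = ∫ t in Ioc a x, f t := by
      rw [hFdef]
      simp only
      rw [intervalIntegral.integral_of_le hx.1.le]
    set ν := volume.restrict (Ioc a x) with hνdef
    set φc : ℝ → ℝ := fun t => f t * Real.sqrt (h₁ t) with hφcdef
    set ψc : ℝ → ℝ := fun t => (Real.sqrt (h₁ t))⁻¹ with hψcdef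
    have hsqrtcont : ContinuousOn (fun t : ℝ => Real.sqrt (h₁ t)) (Icc a b) :=
      Real.continuous_sqrt.comp_continuousOn hconth₁
    have hsqrtpos : ∀ t ∈ Icc a b, 0 < Real.sqrt (h₁ t) := by
      intro t ht
      exact Real.sqrt_pos.2 (div_pos (Real.rpow_pos_of_pos (hpos t ht) _) (hg₀pos t ht))
    have heqψ : EqOn (fun t => ψc t ^ 2) (fun t : ℝ => g₀ t * t ^ ((-(1/2)) : ℝ)) (Ioc a x) := by
      intro t ht
      have ht' := hsubx ht
      simp only [hψcdef]
      rw [← Real.sqrt_inv, Real.sq_sqrt (inv_nonneg.2 (hh₁nn t ht'))]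
      simp only [hh₁def]
      rw [inv_div, div_eq_mul_inv, ← Real.rpow_neg (hpos t ht').le]
    have hφc2 : Integrable (fun t => φc t ^ 2) ν := by
      have heqφ : EqOn (fun t => φc t ^ 2) ψ₁ (Ioc a x) := by
        intro t ht
        simp only [hφcdef, hψ₁def]
        rw [mul_pow, Real.sq_sqrt (hh₁nn t (hsubx ht))]
      exact (integrableOn_congr_fun heqφ measurableSet_Ioc).2 (hψ₁int.mono_set hsubx)
    have hψc2 : Integrable (fun t => ψc t ^ 2) ν :=
      (integrableOn_congr_fun heqψ measurableSet_Ioc).2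
        ((hcontg.integrableOn_Icc).mono_set hsubx)
    have hφm : AEStronglyMeasurable φc ν :=
      (hfx.aestronglyMeasurable).mul
        ((hsqrtcont.mono hsubx).aestronglyMeasurable measurableSet_Ioc)
    have hψm : AEStronglyMeasurable ψc ν := by
      rw [aestronglyMeasurable_iff_aemeasurable]
      exact (((hsqrtcont.mono hsubx).aestronglyMeasurable
        measurableSet_Ioc).aemeasurable).inv
    have hcs := cs_integral φc ψc hφc2 hψc2 hφm hψm
    have hprod : (∫ t, φc t * ψc t ∂ν) = F x := by
      rw [hFx]
      apply setIntegral_congr_fun measurableSet_Ioc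
      intro t ht
      have hs := hsqrtpos t (hsubx ht)
      simp only [hφcdef, hψcdef]
      field_simp
    have hsq1 : (∫ t, φc t ^ 2 ∂ν) = Φ x := by
      apply setIntegral_congr_fun measurableSet_Ioc
      intro t ht
      simp only [hφcdef, hψ₁def]
      rw [mul_pow, Real.sq_sqrt (hh₁nn t (hsubx ht))]
    have hsq2 : (∫ t, ψc t ^ 2 ∂ν) = Θ x - Ta := by
      rw [← hHc x hxb, intervalIntegral.integral_of_le hx.1.le]
      exact setIntegral_congr_fun measurableSet_Ioc heqψ
    rw [hprod, hsq1, hsq2] at hcs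
    have e : ((1/x) * F x)^2 = (F x)^2 * (x^2)⁻¹ := by
      rw [mul_pow]
      ring
    rw [e]
    calc (F x)^2 * (x^2)⁻¹ ≤ (Φ x * (Θ x - Ta)) * (x^2)⁻¹ :=
          mul_le_mul_of_nonneg_right hcs (inv_nonneg.2 (sq_nonneg x))
      _ = φ₁ x * Φ x := by simp only [hφ₁def]; ring
  -- integral comparison
  have hφΦint : IntegrableOn (fun x => φ₁ x * Φ x) (Ioc a c₀) :=
    (((hcontφ₁.mono hIccsub).mul hΦcont).integrableOn_Icc).mono_set Ioc_subset_Icc_self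
  have hE2 : (∫ x in Ioc a c₀, ((1/x) * F x)^2) ≤ ∫ x in Ioc a c₀, φ₁ x * Φ x := by
    apply integral_mono_of_nonneg
    · filter_upwards with x using sq_nonneg _
    · exact hφΦint
    · exact (ae_restrict_iff' measurableSet_Ioc).2 (ae_of_all _ (fun x hx => hCS x hx))
  -- Fubini
  set ν0 := volume.restrict (Ioc a c₀) with hν0def
  have hmIoc : MeasurableSet (Ioc a c₀) := measurableSet_Ioc
  have hφ₁int0 : Integrable φ₁ ν0 :=
    ((hcontφ₁.mono hIccsub).integrableOn_Icc).mono_set Ioc_subset_Icc_self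
  have hψ₁int0 : Integrable ψ₁ ν0 :=
    (hψ₁int.mono_set hIccsub).mono_set Ioc_subset_Icc_self
  set W : ℝ → ℝ → ℝ :=
    fun x t => Set.indicator {q : ℝ × ℝ | q.2 ≤ q.1} (fun q => φ₁ q.1 * ψ₁ q.2) (x, t) with hWdef
  have hWu : Function.uncurry W
      = Set.indicator {q : ℝ × ℝ | q.2 ≤ q.1} (fun q => φ₁ q.1 * ψ₁ q.2) := by
    funext p
    simp only [hWdef, Function.uncurry]
  have hWint : Integrable (Function.uncurry W) (ν0.prod ν0) := by
    have hm : AEStronglyMeasurable (Function.uncurry W) (ν0.prod ν0) := by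
      rw [hWu]
      apply AEStronglyMeasurable.indicator _ (measurableSet_le measurable_snd measurable_fst)
      exact (hφ₁int0.aestronglyMeasurable.comp_fst).mul (hψ₁int0.aestronglyMeasurable.comp_snd)
    apply Integrable.mono' (hφ₁int0.norm.mul_prod hψ₁int0.norm) hm
    filter_upwards with p
    rw [hWu]
    calc ‖Set.indicator {q : ℝ × ℝ | q.2 ≤ q.1} (fun q => φ₁ q.1 * ψ₁ q.2) p‖
        ≤ ‖φ₁ p.1 * ψ₁ p.2‖ := norm_indicator_le_norm_self _ _
      _ = ‖φ₁ p.1‖ * ‖ψ₁ p.2‖ := norm_mul _ _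
  have hswap := MeasureTheory.integral_integral_swap hWint
  have hinner1 : ∀ x ∈ Ioc a c₀, (∫ t, W x t ∂ν0) = φ₁ x * Φ x := by
    intro x hx
    have hWsec : (fun t => W x t) = Set.indicator (Iic x) (fun t => φ₁ x * ψ₁ t) := by
      funext t
      simp only [hWdef, Set.indicator_apply, Set.mem_setOf_eq, Set.mem_Iic]
    rw [hWsec, MeasureTheory.integral_indicator measurableSet_Iic, hν0def,
      Measure.restrict_restrict measurableSet_Iic]
    have hset : Iic x ∩ Ioc a c₀ = Ioc a x := by
      ext y
      simp only [Set.mem_inter_iff, Set.mem_Iic, Set.mem_Ioc]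
      constructor
      · rintro ⟨h1, h2, h3⟩; exact ⟨h2, h1⟩
      · rintro ⟨h1, h2⟩; exact ⟨h2, h1, h2.trans hx.2⟩
    rw [hset, MeasureTheory.integral_const_mul]
  have hinner2 : ∀ t ∈ Ioc a c₀, (∫ x, W x t ∂ν0) = ψ₁ t * ∫ x in Ioc t c₀, φ₁ x := by
    intro t ht
    have hWsec : (fun x => W x t) = Set.indicator (Ici t) (fun x => φ₁ x * ψ₁ t) := by
      funext x
      simp only [hWdef, Set.indicator_apply, Set.mem_setOf_eq, Set.mem_Ici]
    rw [hWsec, MeasureTheory.integral_indicator measurableSet_Ici, hν0def,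
      Measure.restrict_restrict measurableSet_Ici]
    have hset : Ici t ∩ Ioc a c₀ = Icc t c₀ := by
      ext y
      simp only [Set.mem_inter_iff, Set.mem_Ici, Set.mem_Ioc, Set.mem_Icc]
      constructor
      · rintro ⟨h1, h2, h3⟩; exact ⟨h1, h3⟩
      · rintro ⟨h1, h2⟩; exact ⟨h1, ht.1.trans_le h1, h2⟩
    rw [hset, MeasureTheory.integral_Icc_eq_integral_Ioc, MeasureTheory.integral_mul_const]
    ring
  have hE3 : (∫ x in Ioc a c₀, φ₁ x * Φ x) = ∫ t in Ioc a c₀, ψ₁ t * ∫ x in Ioc t c₀, φ₁ x := by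
    calc (∫ x in Ioc a c₀, φ₁ x * Φ x) = ∫ x in Ioc a c₀, ∫ t, W x t ∂ν0 := by
          apply setIntegral_congr_fun hmIoc
          intro x hx
          exact (hinner1 x hx).symm
      _ = ∫ t in Ioc a c₀, ∫ x, W x t ∂ν0 := hswap
      _ = ∫ t in Ioc a c₀, ψ₁ t * ∫ x in Ioc t c₀, φ₁ x := by
          apply setIntegral_congr_fun hmIoc
          intro t ht
          exact hinner2 t ht
  have hE4 : (∫ t in Ioc a c₀, ψ₁ t * ∫ x in Ioc t c₀, φ₁ x) ≤ ∫ t in Ioc a c₀, C * f t ^ 2 := by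
    have key1 : ∀ t ∈ Ioc a c₀, 0 ≤ ψ₁ t * ∫ x in Ioc t c₀, φ₁ x := by
      intro t ht
      have htb : t ∈ Icc a b := ⟨ht.1.le, ht.2.trans hc₀b⟩
      apply mul_nonneg (mul_nonneg (sq_nonneg _) (hh₁nn t htb))
      apply setIntegral_nonneg measurableSet_Ioc
      intro y hy
      exact hφ₁nn y ⟨(ht.1.trans hy.1).le, hy.2.trans hc₀b⟩
    apply integral_mono_of_nonneg
    · exact (ae_restrict_iff' hmIoc).2 (ae_of_all _ key1)
    · exact ((hf2Ioc.mono_set hIocsub).const_mul C)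
    · refine (ae_restrict_iff' hmIoc).2 (ae_of_all _ ?_)
      intro t ht
      have htb : t ∈ Icc a b := ⟨ht.1.le, ht.2.trans hc₀b⟩
      have hR1 : (∫ x in Ioc t c₀, φ₁ x) ≤ Ψ b - Ψ t := by
        rw [← hRint t htb, ← intervalIntegral.integral_of_le ht.2]
        have hadj : (∫ x in t..c₀, φ₁ x) + ∫ x in c₀..b, φ₁ x = ∫ x in t..b, φ₁ x := by
          apply intervalIntegral.integral_add_adjacent_intervals
          · apply ContinuousOn.intervalIntegrable
            rw [uIcc_of_le ht.2]
            exact hcontφ₁.mono (fun y hy => ⟨ht.1.le.trans hy.1, hy.2.trans hc₀b⟩)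
          · apply ContinuousOn.intervalIntegrable
            rw [uIcc_of_le hc₀b]
            exact hcontφ₁.mono (fun y hy => ⟨hc₀a.trans hy.1, hy.2⟩)
        have hnn : 0 ≤ ∫ x in c₀..b, φ₁ x := by
          apply intervalIntegral.integral_nonneg hc₀b
          intro y hy
          exact hφ₁nn y ⟨hc₀a.trans hy.1, hy.2⟩
        linarith
      have hhR : h₁ t * (∫ x in Ioc t c₀, φ₁ x) ≤ C :=
        le_trans (mul_le_mul_of_nonneg_left hR1 (hh₁nn t htb)) (hK t htb)
      calc ψ₁ t * (∫ x in Ioc t c₀, φ₁ x) = f t ^ 2 * (h₁ t * ∫ x in Ioc t c₀, φ₁ x) := by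
            simp only [hψ₁def]
            ring
        _ ≤ f t ^ 2 * C := mul_le_mul_of_nonneg_left hhR (sq_nonneg _)
        _ = C * f t ^ 2 := by ring
  have hE5 : (∫ t in Ioc a c₀, C * f t ^ 2) ≤ C * ∫ x in Ioc a b, f x ^ 2 := by
    rw [MeasureTheory.integral_const_mul]
    apply mul_le_mul_of_nonneg_left _ hCpos.le
    apply setIntegral_mono_set hf2Ioc
    · exact Filter.Eventually.of_forall (fun y => sq_nonneg _)
    · exact HasSubset.Subset.eventuallyLE hIocsub
  calc (∫ x in a..b, ((1 / x) * ∫ t in a..x, f t) ^ 2)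
      = ∫ x in Ioc a c₀, ((1/x) * F x)^2 := hE1
    _ ≤ ∫ x in Ioc a c₀, φ₁ x * Φ x := hE2
    _ = ∫ t in Ioc a c₀, ψ₁ t * ∫ x in Ioc t c₀, φ₁ x := hE3
    _ ≤ ∫ t in Ioc a c₀, C * f t ^ 2 := hE4
    _ ≤ C * ∫ x in Ioc a b, f x ^ 2 := hE5
    _ ≤ (4 - 2 / L ^ 2) * ∫ x in Ioc a b, f x ^ 2 := by
        apply mul_le_mul_of_nonneg_right hC2
        exact setIntegral_nonneg measurableSet_Ioc (fun y hy => sq_nonneg _)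
    _ = (4 - 2 / L ^ 2) * ∫ x in a..b, f x ^ 2 := by
        rw [intervalIntegral.integral_of_le hab.le]


end Upper

/-- The best constant in Hardy's integral inequality on `[a, b]`:
the infimum of all constants `d` such that the inequality holds for every `f`
with `f ^ 2` integrable on `[a, b]`. -/
noncomputable def hardyConst (a b : ℝ) : ℝ :=
  sInf {d : ℝ | ∀ f : ℝ → ℝ, IntegrableOn (fun x => f x ^ 2) (Set.Icc a b) →
    ∫ x in a..b, ((1 / x) * ∫ t in a..x, f t) ^ 2 ≤ d * ∫ x in a..b, f x ^ 2}

theorem hardyConst_asymptotics :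
    ∃ c₁ > (0 : ℝ), ∃ c₂ > (0 : ℝ), ∀ a b : ℝ, 0 < a → a < b →
      1 ≤ Real.log (b / a) →
        4 - c₁ / (Real.log (b / a)) ^ 2 ≤ hardyConst a b ∧
        hardyConst a b ≤ 4 - c₂ / (Real.log (b / a)) ^ 2 := by
  refine ⟨160, by norm_num, 2, by norm_num, ?_⟩
  intro a b ha hab hL
  have hmem : (4 - 2 / (Real.log (b / a)) ^ 2) ∈
      {d : ℝ | ∀ f : ℝ → ℝ, IntegrableOn (fun x => f x ^ 2) (Set.Icc a b) →
        ∫ x in a..b, ((1 / x) * ∫ t in a..x, f t) ^ 2 ≤ d * ∫ x in a..b, f x ^ 2} := by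
    intro f hf
    exact le_trans (hardy_upper ha hab hL f hf) (le_of_eq rfl)
  have hlow : ∀ d ∈ {d : ℝ | ∀ f : ℝ → ℝ, IntegrableOn (fun x => f x ^ 2) (Set.Icc a b) →
      ∫ x in a..b, ((1 / x) * ∫ t in a..x, f t) ^ 2 ≤ d * ∫ x in a..b, f x ^ 2},
      4 - 160 / (Real.log (b / a)) ^ 2 ≤ d := fun d hd => hardy_lower ha hab hL d hd
  constructor
  · exact le_csInf ⟨_, hmem⟩ hlow
  · exact csInf_le ⟨4 - 160 / (Real.log (b / a)) ^ 2, hlow⟩ hmem
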